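/- Under the hypotheses of Theorem 1 (the semi-monotone sufficient descent condition, the lower bound F(x_{k+1}) − R_k ≥ −(α_k²/2)L‖d_k‖² + α_k Δ_k, and convexity of c), one has the key bound |F(x_{k+1}) − R_k − α_k Δ_k| ≤ (α_k²/2) L ‖d_k‖². -/

import Mathlib

open RealInnerProductSpace

lemma descent_lemma {E : Type*} [NormedAddCommGroup E] [InnerProductSpace ℝ E] [CompleteSpace E]
    (f : E → ℝ) (g : E → E) (hdiff : ∀ x, HasGradientAt f (g x) x)
    (L : ℝ) (hL : 0 ≤ L) (hlip : ∀ x y, ‖g x - g y‖ ≤ L * ‖x - y‖)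
    (x v : E) : f (x + v) ≤ f x + ⟪g x, v⟫ + L / 2 * ‖v‖ ^ 2 := by
  have hcg : Continuous g := by
    have : LipschitzWith L.toNNReal g := by
      apply LipschitzWith.of_dist_le_mul
      intro a b
      rw [dist_eq_norm, dist_eq_norm, Real.coe_toNNReal L hL]
      exact hlip a b
    exact this.continuous
  have hγ : ∀ t : ℝ, HasDerivAt (fun t : ℝ => x + t • v) v t := by
    intro t
    simpa using ((hasDerivAt_id t).smul_const v).const_add x
  have hφ : ∀ t : ℝ, HasDerivAt (fun t : ℝ => f (x + t • v)) ⟪g (x + t • v), v⟫ t := by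
    intro t
    have h1 : HasFDerivAt f (InnerProductSpace.toDual ℝ E (g (x + t • v))) (x + t • v) :=
      hdiff (x + t • v)
    have := h1.comp_hasDerivAt t (hγ t)
    simp at this; exact this
  have hcont : Continuous fun t : ℝ => ⟪g (x + t • v), v⟫ := by
    exact (hcg.comp (by continuity)).inner continuous_const
  have hint : IntervalIntegrable (fun t : ℝ => ⟪g (x + t • v), v⟫)
      MeasureTheory.volume 0 1 := hcont.intervalIntegrable 0 1
  have heq : f (x + v) - f x = ∫ t in (0:ℝ)..1, ⟪g (x + t • v), v⟫ := by
    have := intervalIntegral.integral_eq_sub_of_hasDerivAt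
      (fun t _ => hφ t) hint
    simpa using this.symm
  have hbound : (∫ t in (0:ℝ)..1, ⟪g (x + t • v), v⟫)
      ≤ ∫ t in (0:ℝ)..1, (⟪g x, v⟫ + L * t * ‖v‖ ^ 2) := by
    apply intervalIntegral.integral_mono_on (by norm_num) hint
    · exact (continuous_const.add (by continuity)).intervalIntegrable 0 1
    · intro t ht
      have h1 : ⟪g (x + t • v) - g x, v⟫ ≤ ‖g (x + t • v) - g x‖ * ‖v‖ :=
        real_inner_le_norm _ _
      have h2 : ‖g (x + t • v) - g x‖ ≤ L * (t * ‖v‖) := by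
        have := hlip (x + t • v) x
        simpa [norm_smul, abs_of_nonneg ht.1] using this
      have h3 : ⟪g (x + t • v) - g x, v⟫ ≤ L * t * ‖v‖ ^ 2 := by
        calc ⟪g (x + t • v) - g x, v⟫ ≤ ‖g (x + t • v) - g x‖ * ‖v‖ := h1
          _ ≤ L * (t * ‖v‖) * ‖v‖ := by
              apply mul_le_mul_of_nonneg_right h2 (norm_nonneg v)
          _ = L * t * ‖v‖ ^ 2 := by ring
      have := inner_sub_left (𝕜 := ℝ) (g (x + t • v)) (g x) v
      linarith [h3, this.symm.le, this.le]
  have hval : (∫ t in (0:ℝ)..1, (⟪g x, v⟫ + L * t * ‖v‖ ^ 2))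
      = ⟪g x, v⟫ + L / 2 * ‖v‖ ^ 2 := by
    rw [intervalIntegral.integral_add (intervalIntegrable_const)
      (by apply Continuous.intervalIntegrable; continuity)]
    have h4 : (fun t : ℝ => L * t * ‖v‖ ^ 2) = fun t : ℝ => (L * ‖v‖ ^ 2) * t := by
      ext t; ring
    rw [h4, intervalIntegral.integral_const_mul, integral_id]
    simp; ring
  have : f (x + v) - f x ≤ ⟪g x, v⟫ + L / 2 * ‖v‖ ^ 2 := by
    rw [heq]; rw [hval] at hbound; exact hbound
  linarith

/-- Key bound `|F(x_{k+1}) − R_k − α_k Δ_k| ≤ (α_k²/2) L ‖d_k‖²`. -/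
theorem key_abs_bound (n : ℕ) (f c : EuclideanSpace ℝ (Fin n) → ℝ)
    (g : EuclideanSpace ℝ (Fin n) → EuclideanSpace ℝ (Fin n))
    (hf : ConvexOn ℝ Set.univ f) (hdiff : ∀ x, HasGradientAt f (g x) x)
    (L : ℝ) (hL : 0 < L) (hlip : ∀ x y, ‖g x - g y‖ ≤ L * ‖x - y‖)
    (hc : ConvexOn ℝ Set.univ c) (μ : ℝ) (hμ : 0 < μ)
    (F : EuclideanSpace ℝ (Fin n) → ℝ) (hF : ∀ x, F x = f x + μ * c x)
    (xk dk : EuclideanSpace ℝ (Fin n)) (Δ : ℝ)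
    (hΔdef : Δ = ⟪dk, g xk⟫ + μ * (c (xk + dk) - c xk))
    (α : ℝ) (hα0 : 0 < α) (hα1 : α ≤ 1)
    (x1 : EuclideanSpace ℝ (Fin n)) (hx1 : x1 = xk + α • dk)
    (R : ℝ) (hR : F xk ≤ R)
    (hlow : F x1 - R ≥ -(α ^ 2 / 2) * L * ‖dk‖ ^ 2 + α * Δ) :
    |F x1 - R - α * Δ| ≤ (α ^ 2 / 2) * L * ‖dk‖ ^ 2 := by
  have hfd : f x1 ≤ f xk + α * ⟪g xk, dk⟫ + α ^ 2 / 2 * L * ‖dk‖ ^ 2 := by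
    have := descent_lemma f g hdiff L hL.le hlip xk (α • dk)
    rw [hx1]
    have h1 : ⟪g xk, α • dk⟫ = α * ⟪g xk, dk⟫ := real_inner_smul_right _ _ _
    have h2 : ‖α • dk‖ ^ 2 = α ^ 2 * ‖dk‖ ^ 2 := by
      rw [norm_smul]; simp [mul_pow, abs_of_pos hα0, sq_abs]
    rw [h1, h2] at this
    linarith
  have hcd : c x1 ≤ c xk + α * (c (xk + dk) - c xk) := by
    have hcomb : x1 = (1 - α) • xk + α • (xk + dk) := by
      rw [hx1]; module
    have := hc.2 (Set.mem_univ xk) (Set.mem_univ (xk + dk))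
      (by linarith : (0:ℝ) ≤ 1 - α) hα0.le (by ring)
    rw [hcomb]
    calc c ((1 - α) • xk + α • (xk + dk)) ≤ (1 - α) * c xk + α * c (xk + dk) := this
      _ = c xk + α * (c (xk + dk) - c xk) := by ring
  have hup : F x1 - R - α * Δ ≤ α ^ 2 / 2 * L * ‖dk‖ ^ 2 := by
    have hinner : ⟪dk, g xk⟫ = ⟪g xk, dk⟫ := real_inner_comm _ _
    have hF1 := hF x1; have hF0 := hF xk
    have hcd' : μ * c x1 ≤ μ * c xk + μ * (α * (c (xk + dk) - c xk)) := by
      nlinarith [hcd, hμ.le]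
    rw [hΔdef, hinner]
    have : F x1 ≤ F xk + α * (⟪g xk, dk⟫ + μ * (c (xk + dk) - c xk))
        + α ^ 2 / 2 * L * ‖dk‖ ^ 2 := by
      rw [hF1, hF0]; nlinarith [hfd, hcd']
    linarith
  rw [abs_le]
  constructor <;> [linarith [hlow]; linarith [hup]]
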